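/- Let C be a left- and right-cancellative, right-Noetherian category admitting local right lcms and equipped with a Garside map Δ. Let x : A → A be an endomorphism such that for all sufficiently large n, Δ(A) left-divides xⁿ. Then every conjugation from x is cyclic: for every endomorphism y and every morphism f with f ≫ y = x ≫ f, there exist n ≥ 0, morphisms u₁, …, uₙ, and endomorphisms x = x₀, x₁, …, xₙ = y such that f = u₁ ≫ ⋯ ≫ uₙ and for each i, uᵢ ≫ xᵢ = x_{i-1} ≫ uᵢ and uᵢ left-divides x_{i-1}. -/

import Mathlib

open CategoryTheory

/-- `f` left-divides `g` (both with source `X`). -/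
def LDivides {C : Type*} [Category C] {X Y Z : C} (f : X ⟶ Y) (g : X ⟶ Z) : Prop :=
  ∃ h : Y ⟶ Z, g = f ≫ h

/-- `IsCompositeOf S f` means that `f` is a (possibly empty) composite of morphisms
belonging to the class `S`. -/
inductive IsCompositeOf {C : Type*} [Category C]
    (S : ∀ ⦃X Y : C⦄, (X ⟶ Y) → Prop) : ∀ ⦃X Y : C⦄, (X ⟶ Y) → Prop
  | id (X : C) : IsCompositeOf S (𝟙 X)
  | of {X Y : C} {f : X ⟶ Y} : S f → IsCompositeOf S f
  | comp {X Y Z : C} {f : X ⟶ Y} {g : Y ⟶ Z} :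
      IsCompositeOf S f → IsCompositeOf S g → IsCompositeOf S (f ≫ g)

/-- `S` is a Garside family: `S` together with the invertible morphisms generates `C`;
`Isom C ∘ S ⊆ S ∘ Isom C ∪ Isom C`; and every composite of two non-invertible elements of
`S` is in `S ∘ Isom C` or admits an `S`-normal decomposition of length two. -/
def IsGarsideFamily {C : Type*} [Category C]
    (S : ∀ ⦃X Y : C⦄, (X ⟶ Y) → Prop) : Prop :=
  (∀ {X Y : C} (f : X ⟶ Y),
      IsCompositeOf (fun ⦃X' Y'⦄ (g : X' ⟶ Y') => S g ∨ IsIso g) f) ∧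
  (∀ {X Y Z : C} (ε : X ⟶ Y) (f : Y ⟶ Z), IsIso ε → S f →
      (∃ (W : C) (g : X ⟶ W) (ε' : W ⟶ Z), S g ∧ IsIso ε' ∧ ε ≫ f = g ≫ ε') ∨
        IsIso (ε ≫ f)) ∧
  (∀ {X Y Z : C} (f : X ⟶ Y) (g : Y ⟶ Z), S f → S g → ¬ IsIso f → ¬ IsIso g →
      (∃ (W : C) (h : X ⟶ W) (ε : W ⟶ Z), S h ∧ IsIso ε ∧ f ≫ g = h ≫ ε) ∨
      (∃ (Y₁ : C) (f₁ : X ⟶ Y₁) (g₁ : Y₁ ⟶ Z), f ≫ g = f₁ ≫ g₁ ∧ S f₁ ∧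
        (∃ (W : C) (h : Y₁ ⟶ W) (ε : W ⟶ Z), S h ∧ IsIso ε ∧ g₁ = h ≫ ε) ∧
        ¬ IsIso g₁ ∧
        ∀ {V U : C} (k : V ⟶ X) (h : V ⟶ U), S h →
          LDivides h (k ≫ f₁ ≫ g₁) → LDivides h (k ≫ f₁)))

/-- The morphism `Δ(a) ≫ Δ(Φ a) ≫ ⋯` of length `p`, where `Φ = D` on objects. -/
def deltaIter {C : Type*} [Category C] (D : C → C) (Δ : ∀ a : C, a ⟶ D a) :
    ∀ (p : ℕ) (a : C), (a ⟶ D^[p] a)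
  | 0, a => 𝟙 a
  | p + 1, a => Δ a ≫ deltaIter D Δ p (D a)

/-- The `n`-th power of an endomorphism. -/
def endoPow {C : Type*} [Category C] {A : C} (x : A ⟶ A) : ℕ → (A ⟶ A)
  | 0 => 𝟙 A
  | n + 1 => x ≫ endoPow x n

/-- `IsCyclicConj x f y` means that `f` decomposes as a composite `u₁ ≫ ⋯ ≫ uₙ` of
elementary cyclic conjugations from `x` to `y`: there are endomorphisms
`x = x₀, x₁, …, xₙ = y` with `uᵢ ≫ xᵢ = x_{i-1} ≫ uᵢ` and `uᵢ` left-dividing `x_{i-1}`. -/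
inductive IsCyclicConj {C : Type*} [Category C] :
    ∀ {A B : C}, (A ⟶ A) → (A ⟶ B) → (B ⟶ B) → Prop
  | nil {A : C} (x : A ⟶ A) : IsCyclicConj x (𝟙 A) x
  | cons {A B T : C} {x : A ⟶ A} {u : A ⟶ B} {y : B ⟶ B} {f : B ⟶ T} {z : T ⟶ T} :
      u ≫ y = x ≫ u → (∃ v : B ⟶ A, x = u ≫ v) → IsCyclicConj y f z →
      IsCyclicConj x (u ≫ f) z


section ConjAux

variable {C : Type*} [Category C]

theorem endoPow_succ' {A : C} (x : A ⟶ A) (n : ℕ) :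
    endoPow x (n + 1) = endoPow x n ≫ x := by
  induction n with
  | zero => simp [endoPow]
  | succ n ih =>
    show x ≫ endoPow x (n + 1) = (x ≫ endoPow x n) ≫ x
    rw [ih, ← Category.assoc]

theorem endoPow_conj {A B : C} {x : A ⟶ A} {y : B ⟶ B} {f : A ⟶ B}
    (hf : f ≫ y = x ≫ f) (n : ℕ) : endoPow x n ≫ f = f ≫ endoPow y n := by
  induction n with
  | zero => simp [endoPow]
  | succ n ih =>
    show (x ≫ endoPow x n) ≫ f = f ≫ (y ≫ endoPow y n)
    rw [Category.assoc, ih, ← Category.assoc, ← hf, Category.assoc]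

/-- `Δ` is quasi-central: for every `g : b ⟶ a` we have `g ≫ Δ a = Δ b ≫ w`. -/
theorem delta_quasicentral (D : C → C) (Δ : ∀ a : C, a ⟶ D a)
    (S : ∀ ⦃X Y : C⦄, (X ⟶ Y) → Prop)
    (hS : ∀ {X Y : C} (f : X ⟶ Y), S f ↔ ∃ u : Y ⟶ D X, Δ X = f ≫ u)
    (hS' : ∀ {X Y : C} (f : X ⟶ Y), S f ↔
      ∃ (b : C) (e : D b = Y) (h : b ⟶ X), h ≫ f = Δ b ≫ eqToHom e)
    (hgen : ∀ {X Y : C} (f : X ⟶ Y),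
      IsCompositeOf (fun ⦃X' Y'⦄ (g : X' ⟶ Y') => S g ∨ IsIso g) f)
    {b a : C} (g : b ⟶ a) : ∃ w : D b ⟶ D a, g ≫ Δ a = Δ b ≫ w := by
  have h := hgen g
  induction h with
  | id X => exact ⟨𝟙 _, by simp⟩
  | @of X Y g0 hs =>
    have hSg : S g0 := by
      rcases hs with h | h
      · exact h
      · rw [hS]
        exact ⟨inv g0 ≫ Δ X, by simp⟩
    obtain ⟨u, hu⟩ := (hS g0).1 hSg
    have hSu : S u := by
      rw [hS']
      exact ⟨X, rfl, g0, by rw [eqToHom_refl, Category.comp_id]; exact hu.symm⟩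
    obtain ⟨w, hw⟩ := (hS u).1 hSu
    exact ⟨w, by rw [hw, ← Category.assoc, ← hu]⟩
  | comp h1 h2 ih1 ih2 =>
    obtain ⟨w1, hw1⟩ := ih1
    obtain ⟨w2, hw2⟩ := ih2
    exact ⟨w1 ≫ w2, by
      rw [Category.assoc, hw2, ← Category.assoc, hw1, Category.assoc]⟩

/-- Every morphism is either invertible or has a non-invertible `S`-prefix. -/
theorem head_lemma
    (S : ∀ ⦃X Y : C⦄, (X ⟶ Y) → Prop)
    (hgen : ∀ {X Y : C} (f : X ⟶ Y),
      IsCompositeOf (fun ⦃X' Y'⦄ (g : X' ⟶ Y') => S g ∨ IsIso g) f)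
    (hgar2 : ∀ {X Y Z : C} (ε : X ⟶ Y) (f : Y ⟶ Z), IsIso ε → S f →
      (∃ (W : C) (g : X ⟶ W) (ε' : W ⟶ Z), S g ∧ IsIso ε' ∧ ε ≫ f = g ≫ ε') ∨
        IsIso (ε ≫ f))
    {X Y : C} (g : X ⟶ Y) :
    IsIso g ∨ ∃ (Z : C) (s : X ⟶ Z) (g' : Z ⟶ Y), S s ∧ ¬ IsIso s ∧ g = s ≫ g' := by
  have h := hgen g
  induction h with
  | id X => left; infer_instance
  | @of X Y g0 hs =>
    by_cases hiso : IsIso g0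
    · left; exact hiso
    · rcases hs with h | h
      · right; exact ⟨Y, g0, 𝟙 Y, h, hiso, by simp⟩
      · exact absurd h hiso
  | @comp X Y Z g0 h0 h1 h2 ih1 ih2 =>
    rcases ih1 with hiso1 | ⟨Z1, s, g', hs, hns, heq⟩
    · rcases ih2 with hiso2 | ⟨Z2, s, h', hs, hns, heq⟩
      · left
        haveI := hiso1; haveI := hiso2
        infer_instance
      · rcases hgar2 g0 s hiso1 hs with ⟨W, s1, ε, hs1, hε, he⟩ | habs
        · right
          refine ⟨W, s1, ε ≫ h', hs1, ?_, ?_⟩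
          · intro h
            apply hns
            haveI := hiso1; haveI := hε; haveI := h
            have hss : s = inv g0 ≫ (s1 ≫ ε) := by rw [← he]; simp
            rw [hss]; infer_instance
          · rw [heq, ← Category.assoc, he, Category.assoc]
        · exfalso
          apply hns
          haveI := hiso1; haveI := habs
          have hss : s = inv g0 ≫ (g0 ≫ s) := by simp
          rw [hss]; infer_instance
    · right
      exact ⟨Z1, s, g' ≫ h0, hs, hns, by rw [heq, Category.assoc]⟩

end ConjAux

/-- In a cancellative, right-Noetherian category with local right lcms equipped with a
Garside map `Δ`, if an endomorphism `x` satisfies `Δ ≼ xⁿ` for all large `n`, then every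
conjugation from `x` is a composite of cyclic conjugations. -/
theorem conjugacy_of_periodic_is_cyclic
    {C : Type*} [Category C]
    (hl : ∀ {X Y Z : C} (g : X ⟶ Y) (f h : Y ⟶ Z), g ≫ f = g ≫ h → f = h)
    (hr : ∀ {X Y Z : C} (f h : X ⟶ Y) (g : Y ⟶ Z), f ≫ g = h ≫ g → f = h)
    (noeth : ¬ ∃ (T : C) (X : ℕ → C) (f : ∀ i, X i ⟶ T) (h : ∀ i, X i ⟶ X (i + 1)),
      ∀ i, f i = h i ≫ f (i + 1) ∧
        ¬ ∃ ε : X i ⟶ X (i + 1), IsIso ε ∧ f i = ε ≫ f (i + 1))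
    (loclcm : ∀ {A X Y : C} (x : A ⟶ X) (y : A ⟶ Y),
      (∃ (T : C) (t : A ⟶ T), (∃ u, t = x ≫ u) ∧ (∃ u, t = y ≫ u)) →
      ∃ (Z : C) (z : A ⟶ Z), (∃ u, z = x ≫ u) ∧ (∃ u, z = y ≫ u) ∧
        ∀ {T : C} (t : A ⟶ T), (∃ u, t = x ≫ u) → (∃ u, t = y ≫ u) → ∃ u, t = z ≫ u)
    -- the Garside map
    (D : C → C) (Δ : ∀ a : C, a ⟶ D a)
    (S : ∀ ⦃X Y : C⦄, (X ⟶ Y) → Prop)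
    -- `S` is the class of left divisors of `Δ` ...
    (hS : ∀ {X Y : C} (f : X ⟶ Y), S f ↔ ∃ u : Y ⟶ D X, Δ X = f ≫ u)
    -- ... which coincides with the class of right divisors of `Δ`
    (hS' : ∀ {X Y : C} (f : X ⟶ Y), S f ↔
      ∃ (b : C) (e : D b = Y) (h : b ⟶ X), h ≫ f = Δ b ≫ eqToHom e)
    -- `S` is a Garside family
    (hgar : IsGarsideFamily S)
    -- every morphism left-divides some power `Δᵖ` (with `p ≥ 1`)
    (hpow : ∀ {a T : C} (f : a ⟶ T), ∃ p : ℕ, 1 ≤ p ∧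
      ∃ u : T ⟶ D^[p] a, deltaIter D Δ p a = f ≫ u)
    {A : C} (x : A ⟶ A)
    (hx : ∃ N : ℕ, ∀ n, N ≤ n → ∃ u : D A ⟶ A, endoPow x n = Δ A ≫ u)
    {B : C} (y : B ⟶ B) (f : A ⟶ B) (hf : f ≫ y = x ≫ f) :
    IsCyclicConj x f y  := by
  classical
  have hqc : ∀ {b a : C} (g : b ⟶ a), ∃ w : D b ⟶ D a, g ≫ Δ a = Δ b ≫ w :=
    fun {b a} g => delta_quasicentral D Δ S hS hS' hgar.1 g
  have hhead : ∀ {X Y : C} (g : X ⟶ Y),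
      IsIso g ∨ ∃ (Z : C) (s : X ⟶ Z) (g' : Z ⟶ Y), S s ∧ ¬ IsIso s ∧ g = s ≫ g' :=
    fun {X Y} g => head_lemma S hgar.1 hgar.2.1 g
  -- the well-founded order used for the induction
  let M := (X : C) × (X ⟶ B)
  let r : M → M → Prop := fun m2 m1 => ∃ u : m1.1 ⟶ m2.1, ¬ IsIso u ∧ m1.2 = u ≫ m2.2
  have hwf : WellFounded r := by
    by_contra hnwf
    have hex : ∃ a : M, ¬ Acc r a := by
      by_contra hc
      push_neg at hc
      exact hnwf ⟨hc⟩
    obtain ⟨a, ha⟩ := hex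
    have step : ∀ m : {a : M // ¬ Acc r a}, ∃ m' : {a : M // ¬ Acc r a}, r m'.1 m.1 := by
      rintro ⟨m, hm⟩
      obtain ⟨b, hb, hrb⟩ := exists_not_acc_lt_of_not_acc hm
      exact ⟨⟨b, hb⟩, hrb⟩
    choose F hF using step
    let g : ℕ → {a : M // ¬ Acc r a} := fun n => F^[n] ⟨a, ha⟩
    have hg : ∀ n, r (g (n + 1)).1 (g n).1 := by
      intro n
      show r ((F^[n+1] ⟨a, ha⟩ : {a : M // ¬ Acc r a})).1 _
      rw [Function.iterate_succ', Function.comp_apply]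
      exact hF _
    choose u hu1 hu2 using hg
    exact noeth ⟨B, fun i => ((g i).1).1, fun i => ((g i).1).2, fun i => u i, fun i =>
      ⟨hu2 i, by
        rintro ⟨ε, hε, hεe⟩
        have hεu : ε = u i := hr ε (u i) _ (hεe.symm.trans (hu2 i))
        exact hu1 i (hεu ▸ hε)⟩⟩
  suffices H : ∀ m : M, ∀ x' : m.1 ⟶ m.1,
      (∃ N : ℕ, ∀ n, N ≤ n → ∃ c : D m.1 ⟶ m.1, endoPow x' n = Δ m.1 ≫ c) →
      m.2 ≫ y = x' ≫ m.2 → IsCyclicConj x' m.2 y by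
    exact H ⟨A, f⟩ x hx hf
  intro m
  induction m using WellFounded.induction hwf with
  | _ m ih =>
  obtain ⟨A₀, f₀⟩ := m
  intro x₀ hx₀ hf₀
  dsimp only at x₀ hx₀ hf₀ ⊢
  obtain ⟨N, hN⟩ := hx₀
  by_cases hiso : IsIso f₀
  · haveI := hiso
    have hbase : IsCyclicConj x₀ (f₀ ≫ 𝟙 B) y :=
      IsCyclicConj.cons hf₀ ⟨inv f₀ ≫ x₀, by simp⟩ (IsCyclicConj.nil y)
    simpa using hbase
  · rcases hhead f₀ with h | ⟨Z, s, f', hs, hns, hfe⟩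
    · exact absurd h hiso
    obtain ⟨us, hus⟩ := (hS s).1 hs
    obtain ⟨c, hc⟩ := hN N le_rfl
    -- f₀ and x₀ have a non-invertible common left divisor
    have key : ¬ ∀ (W : C) (e : A₀ ⟶ W),
        (∃ a, f₀ = e ≫ a) → (∃ a, x₀ = e ≫ a) → IsIso e := by
      intro hall
      have lemC : ∀ k (W : C) (d : A₀ ⟶ W),
          (∃ a, f₀ = d ≫ a) → (∃ a, endoPow x₀ k = d ≫ a) → IsIso d := by
        intro k
        induction k with
        | zero =>
          rintro W d hdf ⟨a, ha⟩
          have ha' : d ≫ a = 𝟙 A₀ := ha.symm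
          refine ⟨⟨a, ha', ?_⟩⟩
          apply hl d
          rw [← Category.assoc, ha']
          simp
        | succ k ihk =>
          rintro W d hdf ⟨b0, hb0⟩
          have hcm : ∃ (T : C) (t : A₀ ⟶ T),
              (∃ u, t = endoPow x₀ k ≫ u) ∧ (∃ u, t = d ≫ u) :=
            ⟨A₀, endoPow x₀ (k + 1), ⟨x₀, endoPow_succ' x₀ k⟩, ⟨b0, hb0⟩⟩
          obtain ⟨Z0, z, ⟨e, hze⟩, ⟨p, hzp⟩, huniv⟩ := loclcm (endoPow x₀ k) d hcm
          obtain ⟨w1, hw1⟩ := huniv (endoPow x₀ (k + 1))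
            ⟨x₀, endoPow_succ' x₀ k⟩ ⟨b0, hb0⟩
          have hex : e ≫ w1 = x₀ := by
            apply hl (endoPow x₀ k)
            rw [← Category.assoc, ← hze, ← hw1, endoPow_succ']
          obtain ⟨af, haf⟩ := hdf
          obtain ⟨w2, hw2⟩ := huniv (endoPow x₀ k ≫ f₀) ⟨f₀, rfl⟩
            ⟨af ≫ endoPow y k, by
              rw [endoPow_conj hf₀ k, haf, Category.assoc]⟩
          have hef : e ≫ w2 = f₀ := by
            apply hl (endoPow x₀ k)
            rw [← Category.assoc, ← hze, ← hw2]
          have heiso : IsIso e := hall _ e ⟨w2, hef.symm⟩ ⟨w1, hex.symm⟩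
          haveI := heiso
          have hdxk : endoPow x₀ k = d ≫ (p ≫ inv e) := by
            rw [← Category.assoc, ← hzp, hze, Category.assoc]
            simp
          exact ihk W d ⟨af, haf⟩ ⟨p ≫ inv e, hdxk⟩
      exact hns (lemC N Z s ⟨f', hfe⟩
        ⟨us ≫ c, by rw [hc, hus, Category.assoc]⟩)
    push_neg at key
    obtain ⟨A₁, u, hudf, hudx, hun⟩ := key
    obtain ⟨f₁, hf₁⟩ := hudf
    obtain ⟨v, hv⟩ := hudx
    -- the cyclically conjugated endomorphism
    have hf₁c : f₁ ≫ y = (v ≫ u) ≫ f₁ := by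
      apply hl u
      have h1 : u ≫ f₁ ≫ y = f₀ ≫ y := by rw [← Category.assoc, ← hf₁]
      rw [h1, hf₀, hf₁, hv]
      simp [Category.assoc]
    have hx₁pow : ∀ m', endoPow (v ≫ u) (m' + 1) = v ≫ endoPow x₀ m' ≫ u := by
      intro m'
      induction m' with
      | zero => simp [endoPow]
      | succ m' ihm =>
        show (v ≫ u) ≫ endoPow (v ≫ u) (m' + 1) = v ≫ (x₀ ≫ endoPow x₀ m') ≫ u
        rw [ihm, hv]
        simp [Category.assoc]
    obtain ⟨w, hwq⟩ := hqc v
    have hx₁ : ∃ N₁ : ℕ, ∀ n, N₁ ≤ n →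
        ∃ c' : D A₁ ⟶ A₁, endoPow (v ≫ u) n = Δ A₁ ≫ c' := by
      refine ⟨N + 1, ?_⟩
      intro n hn
      obtain ⟨m', rfl⟩ : ∃ m', n = m' + 1 := ⟨n - 1, by omega⟩
      obtain ⟨c', hc'⟩ := hN m' (by omega)
      refine ⟨w ≫ c' ≫ u, ?_⟩
      rw [hx₁pow, hc', ← Category.assoc, ← Category.assoc, hwq]
      simp [Category.assoc]
    have hrec : IsCyclicConj (v ≫ u) f₁ y :=
      ih ⟨A₁, f₁⟩ ⟨u, hun, hf₁⟩ (v ≫ u) hx₁ hf₁c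
    have hcons : IsCyclicConj x₀ (u ≫ f₁) y :=
      IsCyclicConj.cons (by rw [← Category.assoc, ← hv]) ⟨v, hv⟩ hrec
    rw [hf₁]
    exact hcons
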